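/- Generalized weight maximum on the index set: For shape parameter T ∈ [-r/t, 1) (with t > 0, r ≥ 0) and refinement N ≥ 1, the maximum of ω^{r,t} over I_N^{d,T} satisfies max_{k ∈ I_N^{d,T}} ω^{r,t}(k) ≤ d^{(Tt+r)/(1-T)} · N^{r+t}. -/
import Mathlib


open scoped BigOperators

/-- The weight `ω^{r,t}(k) = max(1,‖k‖₁)^r · ∏_s max(1,|k_s|)^t`. -/
noncomputable def wt (d : ℕ) (α β : ℝ) (k : Fin d → ℤ) : ℝ :=
  (max 1 (∑ s, |(k s : ℝ)|)) ^ α * ∏ s, (max 1 |(k s : ℝ)|) ^ β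

lemma one_le_prod_real {ι : Type*} (s : Finset ι) (f : ι → ℝ)
    (h : ∀ i ∈ s, 1 ≤ f i) : 1 ≤ ∏ i ∈ s, f i := by
  calc (1:ℝ) = ∏ _i ∈ s, 1 := by simp
    _ ≤ ∏ i ∈ s, f i := Finset.prod_le_prod (fun i _ => zero_le_one) h

theorem stmt18 (d : ℕ) (hd : 0 < d) (r t T N : ℝ) (hr : 0 ≤ r) (ht : 0 < t)
    (hT1 : T < 1) (hT0 : -r / t ≤ T) (hN : 1 ≤ N) (k : Fin d → ℤ)
    (hk : (max 1 (∑ s, |(k s : ℝ)|)) ^ (-T) * ∏ s, max 1 |(k s : ℝ)| ≤ N ^ (1 - T)) :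
    wt d r t k ≤ (d : ℝ) ^ ((T * t + r) / (1 - T)) * N ^ (r + t) := by
  have h1T : (0:ℝ) < 1 - T := by linarith
  set M := max 1 (∑ s, |(k s : ℝ)|) with hMdef
  set P := ∏ s, max 1 |(k s : ℝ)| with hPdef
  have hM1 : (1:ℝ) ≤ M := le_max_left _ _
  have hM0 : (0:ℝ) < M := zero_lt_one.trans_le hM1
  have hP1 : (1:ℝ) ≤ P := by
    rw [hPdef]
    exact one_le_prod_real _ _ fun s _ => le_max_left _ _
  have hP0 : (0:ℝ) < P := zero_lt_one.trans_le hP1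
  have hN0 : (0:ℝ) < N := zero_lt_one.trans_le hN
  have hd1 : (1:ℝ) ≤ (d:ℝ) := by exact_mod_cast hd
  have hd0 : (0:ℝ) < (d:ℝ) := zero_lt_one.trans_le hd1
  have hrt : 0 ≤ r + T * t := by
    have h := (div_le_iff₀ ht).mp hT0
    nlinarith
  have hPM : P ≤ M ^ T * N ^ (1 - T) := by
    have h := mul_le_mul_of_nonneg_left hk (Real.rpow_nonneg hM0.le T)
    calc P = M ^ T * (M ^ (-T) * P) := by
          rw [← mul_assoc, ← Real.rpow_add hM0, add_neg_cancel, Real.rpow_zero, one_mul]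
      _ ≤ M ^ T * N ^ (1 - T) := h
  have hMP : M ≤ (d:ℝ) * P := by
    have h1 : ∑ s, |(k s : ℝ)| ≤ ∑ s, max 1 |(k s : ℝ)| :=
      Finset.sum_le_sum fun s _ => le_max_right _ _
    have h2 : ∑ s : Fin d, max 1 |(k s : ℝ)| ≤ (d:ℝ) * P := by
      have hb : ∀ s ∈ (Finset.univ : Finset (Fin d)), max 1 |(k s : ℝ)| ≤ P := by
        intro s _
        have herase : (1:ℝ) ≤ ∏ i ∈ Finset.univ.erase s, max 1 |(k i : ℝ)| :=
          one_le_prod_real _ _ fun i _ => le_max_left _ _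
        have hfs : (0:ℝ) ≤ max 1 |(k s : ℝ)| := le_trans zero_le_one (le_max_left _ _)
        calc max 1 |(k s : ℝ)| = 1 * max 1 |(k s : ℝ)| := (one_mul _).symm
          _ ≤ (∏ i ∈ Finset.univ.erase s, max 1 |(k i : ℝ)|) * max 1 |(k s : ℝ)| :=
            mul_le_mul_of_nonneg_right herase hfs
          _ = P := Finset.prod_erase_mul _ _ (Finset.mem_univ s)
      calc ∑ s : Fin d, max 1 |(k s : ℝ)| ≤ ∑ _s : Fin d, P := Finset.sum_le_sum hb
        _ = (d:ℝ) * P := by simp [mul_comm]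
    have h3 : (1:ℝ) ≤ (d:ℝ) * P := by nlinarith
    exact max_le h3 (h1.trans h2)
  have hMN : M ≤ (d:ℝ) ^ ((1:ℝ)/(1-T)) * N := by
    have key : M ^ (1 - T) ≤ (d:ℝ) * N ^ (1 - T) := by
      have h := hMP.trans (mul_le_mul_of_nonneg_left hPM hd0.le)
      have h2 := mul_le_mul_of_nonneg_right h (Real.rpow_nonneg hM0.le (-T))
      calc M ^ (1-T) = M ^ (1:ℝ) * M ^ (-T) := by
            rw [← Real.rpow_add hM0]; ring_nf
        _ = M * M ^ (-T) := by rw [Real.rpow_one]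
        _ ≤ (d:ℝ) * (M ^ T * N ^ (1-T)) * M ^ (-T) := h2
        _ = (d:ℝ) * N ^ (1-T) * (M ^ T * M ^ (-T)) := by ring
        _ = (d:ℝ) * N ^ (1-T) := by
            rw [← Real.rpow_add hM0, add_neg_cancel, Real.rpow_zero, mul_one]
    calc M = (M ^ (1-T)) ^ ((1:ℝ)/(1-T)) := by
          rw [← Real.rpow_mul hM0.le, mul_one_div, div_self h1T.ne', Real.rpow_one]
      _ ≤ ((d:ℝ) * N ^ (1-T)) ^ ((1:ℝ)/(1-T)) := by
          apply Real.rpow_le_rpow (Real.rpow_nonneg hM0.le _) key (by positivity)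
      _ = (d:ℝ) ^ ((1:ℝ)/(1-T)) * N := by
          rw [Real.mul_rpow hd0.le (Real.rpow_nonneg hN0.le _), ← Real.rpow_mul hN0.le]
          rw [mul_one_div, div_self h1T.ne', Real.rpow_one]
  have hwt : wt d r t k = M ^ r * P ^ t := by
    rw [wt]
    congr 1
    exact Real.finset_prod_rpow _ _ (fun s _ => le_trans zero_le_one (le_max_left _ _)) t
  rw [hwt]
  calc M ^ r * P ^ t ≤ M ^ r * (M ^ T * N ^ (1-T)) ^ t := by
        apply mul_le_mul_of_nonneg_left (Real.rpow_le_rpow hP0.le hPM ht.le)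
          (Real.rpow_nonneg hM0.le r)
    _ = M ^ (r + T*t) * N ^ ((1-T)*t) := by
        rw [Real.mul_rpow (Real.rpow_nonneg hM0.le _) (Real.rpow_nonneg hN0.le _),
          ← Real.rpow_mul hM0.le, ← Real.rpow_mul hN0.le, ← mul_assoc,
          ← Real.rpow_add hM0]
    _ ≤ ((d:ℝ) ^ ((1:ℝ)/(1-T)) * N) ^ (r + T*t) * N ^ ((1-T)*t) := by
        apply mul_le_mul_of_nonneg_right (Real.rpow_le_rpow hM0.le hMN hrt)
          (Real.rpow_nonneg hN0.le _)
    _ = (d:ℝ) ^ ((T * t + r) / (1 - T)) * N ^ (r + t) := by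
        rw [Real.mul_rpow (Real.rpow_nonneg hd0.le _) hN0.le, ← Real.rpow_mul hd0.le,
          mul_assoc, ← Real.rpow_add hN0]
        congr 1
        · congr 1; field_simp; ring
        · congr 1; ring
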